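/- arXiv:2404.08499 — 3 statements merged into one kernel-verified Lean document; each statement's English description precedes it below -/
import Mathlib

section
/- Let N ≥ 3 and let a : ℝ → (0,∞)^{2N} be a differentiable curve. Then a satisfies the periodic Volterra lattice equations ȧ_j = a_j(a_{j+1} − a_{j−1}) for all j if and only if the matrices L(a(t)) and A(a(t)) satisfy the Lax equation d/dt L(a(t)) = A(a(t))·L(a(t)) − L(a(t))·A(a(t)) for all t. -/
open Matrix

instance neZeroTwoMul (N : ℕ) [NeZero N] : NeZero (2 * N) :=
  ⟨by have := NeZero.ne N; omega⟩

/-- `Emat N r s` is the `2N × 2N` real matrix with a `1` in position `(r, s)`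
and zeros elsewhere, indices taken mod `2N`. -/
noncomputable def Emat (N : ℕ) [NeZero N] (r s : ZMod (2 * N)) :
    Matrix (ZMod (2 * N)) (ZMod (2 * N)) ℝ :=
  Matrix.single r s 1

/-- The antisymmetric Lax matrix of the Volterra lattice:
`L(a) = ∑ j, √(a j) • (E_{j,j+1} - E_{j+1,j})`. -/
noncomputable def LaxL (N : ℕ) [NeZero N] (a : ZMod (2 * N) → ℝ) :
    Matrix (ZMod (2 * N)) (ZMod (2 * N)) ℝ :=
  ∑ j : ZMod (2 * N), Real.sqrt (a j) • (Emat N j (j + 1) - Emat N (j + 1) j)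

/-- The companion matrix of the Volterra lattice:
`A(a) = (1/2) ∑ j, √(a j * a (j+1)) • (E_{j+2,j} - E_{j,j+2})`. -/
noncomputable def LaxA (N : ℕ) [NeZero N] (a : ZMod (2 * N) → ℝ) :
    Matrix (ZMod (2 * N)) (ZMod (2 * N)) ℝ :=
  (1 / 2 : ℝ) • ∑ j : ZMod (2 * N),
    Real.sqrt (a j * a (j + 1)) • (Emat N (j + 2) j - Emat N j (j + 2))

lemma Emat_apply (N : ℕ) [NeZero N] (r s i j : ZMod (2 * N)) :
    Emat N r s i j = if r = i ∧ s = j then 1 else 0 := by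
  simp [Emat, Matrix.single]

lemma LaxL_apply (N : ℕ) [NeZero N] (a : ZMod (2 * N) → ℝ) (i j : ZMod (2 * N)) :
    LaxL N a i j = (if j = i + 1 then Real.sqrt (a i) else 0)
      - (if i = j + 1 then Real.sqrt (a j) else 0) := by
  unfold LaxL
  rw [Matrix.sum_apply]
  simp only [Matrix.smul_apply, Matrix.sub_apply, Emat_apply, smul_eq_mul, mul_sub]
  rw [Finset.sum_sub_distrib]
  congr 1
  · rw [Finset.sum_eq_single i]
    · by_cases h : j = i + 1 <;> simp [h, eq_comm]
    · intro k _ hk; simp [hk]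
    · simp
  · rw [Finset.sum_eq_single j]
    · by_cases h : i = j + 1 <;> simp [h, eq_comm]
    · intro k _ hk; simp [hk]
    · simp

lemma LaxA_apply (N : ℕ) [NeZero N] (a : ZMod (2 * N) → ℝ) (i j : ZMod (2 * N)) :
    LaxA N a i j = (1/2 : ℝ) * ((if i = j + 2 then Real.sqrt (a j * a (j + 1)) else 0)
      - (if j = i + 2 then Real.sqrt (a i * a (i + 1)) else 0)) := by
  unfold LaxA
  rw [Matrix.smul_apply, Matrix.sum_apply]
  simp only [Matrix.smul_apply, Matrix.sub_apply, Emat_apply, smul_eq_mul, mul_sub]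
  rw [Finset.sum_sub_distrib]
  have h1 : (∑ x : ZMod (2 * N), Real.sqrt (a x * a (x + 1)) * if x + 2 = i ∧ x = j then 1 else 0)
      = if i = j + 2 then Real.sqrt (a j * a (j + 1)) else 0 := by
    rw [Finset.sum_eq_single j]
    · by_cases h : i = j + 2 <;> simp [h, eq_comm]
    · intro k _ hk; simp [hk]
    · simp
  have h2 : (∑ x : ZMod (2 * N), Real.sqrt (a x * a (x + 1)) * if x = i ∧ x + 2 = j then 1 else 0)
      = if j = i + 2 then Real.sqrt (a i * a (i + 1)) else 0 := by
    rw [Finset.sum_eq_single i]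
    · by_cases h : j = i + 2 <;> simp [h, eq_comm]
    · intro k _ hk; simp [hk]
    · simp
  rw [h1, h2]
  ring

lemma zmod_cast_ne (N : ℕ) [NeZero N] (hN : 3 ≤ N) {k : ℕ} (h0 : 0 < k) (h6 : k < 6) :
    ((k : ℕ) : ZMod (2 * N)) ≠ 0 := by
  rw [Ne, ZMod.natCast_eq_zero_iff]
  intro h
  have := Nat.le_of_dvd h0 h
  omega

lemma two_ne (N : ℕ) [NeZero N] (hN : 3 ≤ N) : (2 : ZMod (2 * N)) ≠ 0 := by
  have := zmod_cast_ne N hN (k := 2) (by norm_num) (by norm_num)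
  exact_mod_cast this

lemma three_ne (N : ℕ) [NeZero N] (hN : 3 ≤ N) : (3 : ZMod (2 * N)) ≠ 0 := by
  have := zmod_cast_ne N hN (k := 3) (by norm_num) (by norm_num)
  exact_mod_cast this

lemma four_ne (N : ℕ) [NeZero N] (hN : 3 ≤ N) : (4 : ZMod (2 * N)) ≠ 0 := by
  have := zmod_cast_ne N hN (k := 4) (by norm_num) (by norm_num)
  exact_mod_cast this

lemma AL_apply (N : ℕ) [NeZero N] (hN : 3 ≤ N) (a : ZMod (2 * N) → ℝ) (i j : ZMod (2 * N)) :
    (LaxA N a * LaxL N a) i j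
      = LaxA N a i (i - 2) * LaxL N a (i - 2) j + LaxA N a i (i + 2) * LaxL N a (i + 2) j := by
  have hne : (i - 2 : ZMod (2 * N)) ≠ i + 2 := fun h =>
    four_ne N hN (by linear_combination -h)
  rw [Matrix.mul_apply,
    ← Finset.sum_subset (Finset.subset_univ ({i - 2, i + 2} : Finset (ZMod (2 * N))))
      (fun x _ hx => ?_), Finset.sum_pair hne]
  simp only [Finset.mem_insert, Finset.mem_singleton, not_or] at hx
  rw [LaxA_apply, if_neg (fun h => hx.1 (by linear_combination -h)),
    if_neg (fun h => hx.2 h)]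
  ring

lemma LA_apply (N : ℕ) [NeZero N] (hN : 3 ≤ N) (a : ZMod (2 * N) → ℝ) (i j : ZMod (2 * N)) :
    (LaxL N a * LaxA N a) i j
      = LaxL N a i (i + 1) * LaxA N a (i + 1) j + LaxL N a i (i - 1) * LaxA N a (i - 1) j := by
  have hne : (i + 1 : ZMod (2 * N)) ≠ i - 1 := fun h =>
    two_ne N hN (by linear_combination h)
  rw [Matrix.mul_apply,
    ← Finset.sum_subset (Finset.subset_univ ({i + 1, i - 1} : Finset (ZMod (2 * N))))
      (fun x _ hx => ?_), Finset.sum_pair hne]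
  simp only [Finset.mem_insert, Finset.mem_singleton, not_or] at hx
  rw [LaxL_apply, if_neg (fun h => hx.1 h),
    if_neg (fun h => hx.2 (by linear_combination -h))]
  ring

lemma comm_entry (N : ℕ) [NeZero N] (hN : 3 ≤ N) (a : ZMod (2 * N) → ℝ)
    (ha : ∀ k, 0 < a k) (i j : ZMod (2 * N)) :
    (LaxA N a * LaxL N a - LaxL N a * LaxA N a) i j
      = (if j = i + 1 then (1/2) * Real.sqrt (a i) * (a (i + 1) - a (i - 1)) else 0)
        - (if i = j + 1 then (1/2) * Real.sqrt (a j) * (a (j + 1) - a (j - 1)) else 0) := by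
  have hsm : ∀ k m : ZMod (2 * N), Real.sqrt (a k * a m) = Real.sqrt (a k) * Real.sqrt (a m) :=
    fun k m => Real.sqrt_mul (ha k).le _
  have hbb : ∀ k : ZMod (2 * N), Real.sqrt (a k) * Real.sqrt (a k) = a k :=
    fun k => Real.mul_self_sqrt (ha k).le
  rw [Matrix.sub_apply, AL_apply N hN, LA_apply N hN]
  simp only [LaxA_apply, LaxL_apply]
  simp only [show i - 2 + 2 = i from by ring, show i - 1 + 1 = i from by ring,
    show i - 2 + 1 = i - 1 from by ring, show i + 2 + 1 = i + 3 from by ring,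
    show i + 1 + 1 = i + 2 from by ring, show i + 1 + 2 = i + 3 from by ring,
    show i - 1 + 2 = i + 1 from by ring, show i + 2 + 2 = i + 4 from by ring,
    show ((i - 2 : ZMod (2 * N)) = i + 2) ↔ False from
      iff_false_intro (fun h => four_ne N hN (by linear_combination -h)),
    show ((i : ZMod (2 * N)) = i + 4) ↔ False from
      iff_false_intro (fun h => four_ne N hN (by linear_combination -h)),
    show ((i : ZMod (2 * N)) = i + 2) ↔ False from
      iff_false_intro (fun h => two_ne N hN (by linear_combination -h)),
    show ((i - 1 : ZMod (2 * N)) = i + 1) ↔ False from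
      iff_false_intro (fun h => two_ne N hN (by linear_combination -h)),
    show ((i - 2 : ZMod (2 * N)) = j + 1) ↔ (j = i - 3) from
      ⟨fun h => by linear_combination -h, fun h => by linear_combination -h⟩,
    show ((i + 2 : ZMod (2 * N)) = j + 1) ↔ (j = i + 1) from
      ⟨fun h => by linear_combination -h, fun h => by linear_combination -h⟩,
    show ((i + 1 : ZMod (2 * N)) = j + 2) ↔ (j = i - 1) from
      ⟨fun h => by linear_combination -h, fun h => by linear_combination -h⟩,
    show ((i - 1 : ZMod (2 * N)) = j + 2) ↔ (j = i - 3) from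
      ⟨fun h => by linear_combination -h, fun h => by linear_combination -h⟩,
    show ((i : ZMod (2 * N)) = j + 1) ↔ (j = i - 1) from
      ⟨fun h => by linear_combination -h, fun h => by linear_combination -h⟩,
    eq_self_iff_true, if_true, if_false]
  by_cases hc1 : j = i + 1
  · subst hc1
    simp only [show ((i + 1 : ZMod (2 * N)) = i - 1) ↔ False from
        iff_false_intro (fun h => two_ne N hN (by linear_combination h)),
      show ((i + 1 : ZMod (2 * N)) = i - 3) ↔ False from
        iff_false_intro (fun h => four_ne N hN (by linear_combination h)),
      show ((i + 1 : ZMod (2 * N)) = i + 3) ↔ False from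
        iff_false_intro (fun h => two_ne N hN (by linear_combination -h)),
      eq_self_iff_true, if_true, if_false, hsm,
      show i + 1 + 1 = i + 2 from by ring, show i + 1 - 1 = i from by ring]
    linear_combination (1 / 2 * Real.sqrt (a i)) * hbb (i + 1)
      - (1 / 2 * Real.sqrt (a i)) * hbb (i - 1)
  · by_cases hc2 : j = i - 1
    · subst hc2
      simp only [show ((i - 1 : ZMod (2 * N)) = i + 1) ↔ False from
          iff_false_intro (fun h => two_ne N hN (by linear_combination -h)),
        show ((i - 1 : ZMod (2 * N)) = i - 3) ↔ False from
          iff_false_intro (fun h => two_ne N hN (by linear_combination h)),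
        show ((i - 1 : ZMod (2 * N)) = i + 3) ↔ False from
          iff_false_intro (fun h => four_ne N hN (by linear_combination -h)),
        eq_self_iff_true, if_true, if_false, hsm,
        show i - 1 + 1 = i from by ring, show i - 1 - 1 = i - 2 from by ring]
      linear_combination (1 / 2 * Real.sqrt (a (i - 1))) * hbb (i - 2)
        - (1 / 2 * Real.sqrt (a (i - 1))) * hbb i
    · by_cases hc3 : j = i + 3
      · subst hc3
        by_cases hc4 : (i + 3 : ZMod (2 * N)) = i - 3
        · simp only [eq_self_iff_true, if_true, if_false, hc4, if_pos, hsm,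
            show i + 3 + 1 = i + 4 from by ring,
            show i - 3 + 1 = i - 2 from by ring, show i - 3 - 1 = i - 4 from by ring,
            show ((i - 3 : ZMod (2 * N)) = i - 1) ↔ False from
              iff_false_intro (fun h => two_ne N hN (by linear_combination -h)),
            show ((i - 3 : ZMod (2 * N)) = i + 1) ↔ False from
              iff_false_intro (fun h => four_ne N hN (by linear_combination -h))]
          ring
        · simp only [eq_self_iff_true, if_true, iff_false_intro hc4, if_false, hsm,
            show i + 3 + 1 = i + 4 from by ring, show i + 3 - 1 = i + 2 from by ring,
            iff_false_intro hc1, iff_false_intro hc2]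
          ring
      · by_cases hc4 : j = i - 3
        · subst hc4
          simp only [eq_self_iff_true, if_true, iff_false_intro hc3, if_false,
            iff_false_intro hc1, iff_false_intro hc2, hsm,
            show i - 3 + 1 = i - 2 from by ring]
          ring
        · simp only [iff_false_intro hc1, iff_false_intro hc2, iff_false_intro hc3,
            iff_false_intro hc4, if_false]
          ring

/-- A differentiable positive curve `a` satisfies the periodic Volterra lattice equations
iff the pair `(L, A)` satisfies the Lax equation `d/dt L(a(t)) = [A(a(t)), L(a(t))]`. -/
theorem volterra_iff_lax (N : ℕ) [NeZero N] (hN : 3 ≤ N)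
    (a : ℝ → ZMod (2 * N) → ℝ)
    (hpos : ∀ t j, 0 < a t j)
    (hdiff : ∀ j, Differentiable ℝ fun t => a t j) :
    (∀ t j, HasDerivAt (fun s => a s j) (a t j * (a t (j + 1) - a t (j - 1))) t)
      ↔ (∀ t i j, HasDerivAt (fun s => LaxL N (a s) i j)
          ((LaxA N (a t) * LaxL N (a t) - LaxL N (a t) * LaxA N (a t)) i j) t) := by
  constructor
  · intro hV t i j
    have key : ∀ k, HasDerivAt (fun s => Real.sqrt (a s k))
        (1 / 2 * Real.sqrt (a t k) * (a t (k + 1) - a t (k - 1))) t := by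
      intro k
      have h1 := (Real.hasDerivAt_sqrt (ne_of_gt (hpos t k))).comp t (hV t k)
      refine h1.congr_deriv (Eq.symm ?_)
      have hs : Real.sqrt (a t k) ≠ 0 := ne_of_gt (Real.sqrt_pos.mpr (hpos t k))
      have hss : Real.sqrt (a t k) * Real.sqrt (a t k) = a t k :=
        Real.mul_self_sqrt (hpos t k).le
      field_simp
      linear_combination (a t (k + 1) - a t (k - 1)) * hss
    rw [comm_entry N hN _ (hpos t) i j]
    have hfun : (fun s => LaxL N (a s) i j)
        = fun s => (if j = i + 1 then Real.sqrt (a s i) else 0)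
          - (if i = j + 1 then Real.sqrt (a s j) else 0) :=
      funext fun s => LaxL_apply N (a s) i j
    rw [hfun]
    apply HasDerivAt.sub
    · by_cases h : j = i + 1
      · simp only [if_pos h]; exact key i
      · simp only [if_neg h]; exact hasDerivAt_const t 0
    · by_cases h : i = j + 1
      · simp only [if_pos h]; exact key j
      · simp only [if_neg h]; exact hasDerivAt_const t 0
  · intro hL t j
    have hfalse : ¬(j : ZMod (2 * N)) = (j + 1) + 1 := fun h =>
      two_ne N hN (by linear_combination -h)
    have h1 := hL t j (j + 1)
    rw [comm_entry N hN _ (hpos t) j (j + 1), if_pos rfl, if_neg hfalse, sub_zero] at h1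
    have hfun : (fun s => LaxL N (a s) j (j + 1)) = fun s => Real.sqrt (a s j) :=
      funext fun s => by rw [LaxL_apply, if_pos rfl, if_neg hfalse, sub_zero]
    rw [hfun] at h1
    have hD := (hdiff j t).hasDerivAt
    have h2 := (Real.hasDerivAt_sqrt (ne_of_gt (hpos t j))).comp t hD
    have heq := h1.unique h2
    have hs : Real.sqrt (a t j) ≠ 0 := ne_of_gt (Real.sqrt_pos.mpr (hpos t j))
    have hss := Real.mul_self_sqrt (hpos t j).le
    have : a t j * (a t (j + 1) - a t (j - 1)) = deriv (fun s => a s j) t := by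
      field_simp at heq
      linear_combination heq - (a t (j + 1) - a t (j - 1)) * hss
    rw [this]
    exact hD
end

section
/- Let N ≥ 3 and let a : ℝ → (0,∞)^{2N} be a differentiable solution of the periodic Volterra lattice equations ȧ_j = a_j(a_{j+1} − a_{j−1}). Then for every n ∈ ℕ the conserved field Q^{[n]}(t) = (−1)^n · trace(L(a(t))^{2n}) is constant in t. -/
open Matrix

section VolterraAux

variable (N : ℕ) [NeZero N]

private lemma Emat_mul (r s u v : ZMod (2 * N)) :
    Emat N r s * Emat N u v = if s = u then Emat N r v else 0 := by
  by_cases h : s = u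
  · subst h
    simp [Emat, Matrix.single_mul_single_same]
  · simp [Emat, Matrix.single_mul_single_of_ne, h]

private lemma sum_shift_up {M : Type*} [AddCommMonoid M] (g : ZMod (2 * N) → M) :
    (∑ j : ZMod (2 * N), g j) = ∑ j : ZMod (2 * N), g (j + 1) :=
  (Fintype.sum_equiv (Equiv.addRight (1 : ZMod (2 * N))) (fun j => g (j + 1)) g
    fun _ => rfl).symm

private lemma sum_shift_down {M : Type*} [AddCommMonoid M] (g : ZMod (2 * N) → M) :
    (∑ j : ZMod (2 * N), g j) = ∑ j : ZMod (2 * N), g (j - 1) :=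
  (Fintype.sum_equiv (Equiv.subRight (1 : ZMod (2 * N))) (fun j => g (j - 1)) g
    fun _ => rfl).symm

/-- The Lax-pair identity for the Volterra lattice. -/
private lemma lax_pair (c : ZMod (2 * N) → ℝ) :
    (∑ j : ZMod (2 * N), (c j * (c (j+1) * c (j+1) - c (j-1) * c (j-1)) / 2) •
        (Emat N j (j+1) - Emat N (j+1) j))
      = (∑ j : ZMod (2 * N), c j • (Emat N j (j+1) - Emat N (j+1) j)) *
          (∑ j : ZMod (2 * N), (c j * c (j+1) / 2) • (Emat N j (j+2) - Emat N (j+2) j))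
        - (∑ j : ZMod (2 * N), (c j * c (j+1) / 2) • (Emat N j (j+2) - Emat N (j+2) j)) *
          (∑ j : ZMod (2 * N), c j • (Emat N j (j+1) - Emat N (j+1) j)) := by
  have hcond1 : ∀ j k : ZMod (2 * N), (j + 1 = k + 2) = (j - 1 = k) :=
    fun j k => propext ⟨fun h => by linear_combination h, fun h => by linear_combination h⟩
  have hcond2 : ∀ j k : ZMod (2 * N), (j = k + 2) = (j - 2 = k) :=
    fun j k => propext ⟨fun h => by linear_combination h, fun h => by linear_combination h⟩
  have hcond3 : ∀ j k : ZMod (2 * N), (j + 2 = k + 1) = (j + 1 = k) :=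
    fun j k => propext ⟨fun h => by linear_combination h, fun h => by linear_combination h⟩
  have hcond4 : ∀ j k : ZMod (2 * N), (j = k + 1) = (j - 1 = k) :=
    fun j k => propext ⟨fun h => by linear_combination h, fun h => by linear_combination h⟩
  have i1 : ∀ x : ZMod (2 * N), x + 1 + 1 = x + 2 := fun x => by ring
  have i2 : ∀ x : ZMod (2 * N), x + 1 + 2 = x + 3 := fun x => by ring
  have i3 : ∀ x : ZMod (2 * N), x + 2 + 1 = x + 3 := fun x => by ring
  have i4 : ∀ x : ZMod (2 * N), x - 1 + 1 = x := fun x => by ring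
  have i5 : ∀ x : ZMod (2 * N), x - 1 + 2 = x + 1 := fun x => by ring
  have i6 : ∀ x : ZMod (2 * N), x + 1 - 1 = x := fun x => by ring
  have i7 : ∀ x : ZMod (2 * N), x + 1 - 2 = x - 1 := fun x => by ring
  have i8 : ∀ x : ZMod (2 * N), x - 2 + 1 = x - 1 := fun x => by ring
  rw [Finset.sum_mul_sum, Finset.sum_mul_sum, ← Finset.sum_sub_distrib]
  simp only [smul_mul_assoc, mul_smul_comm, smul_smul, sub_mul, mul_sub, Emat_mul,
    hcond1, hcond2, hcond3, hcond4, smul_sub, smul_ite, smul_zero,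
    Finset.sum_sub_distrib, Finset.sum_ite_eq, Finset.mem_univ, if_true,
    i1, i2, i3, i4, i5, i6, i7, i8]
  rw [sum_shift_down N (fun x => (c x * c (x + 1) / 2 * c x) • Emat N (x + 1) (x + 2)),
      sum_shift_up N (fun x => (c (x - 1) * c x / 2 * c x) • Emat N x (x - 1)),
      sum_shift_up N (fun x => (c (x - 2) * c (x - 1) / 2 * c x) • Emat N (x + 1) (x - 2)),
      sum_shift_down N (fun x => (c x * (c x * c (x + 1) / 2)) • Emat N (x + 2) (x + 1))]
  simp only [i1, i2, i3, i4, i5, i6, i7, i8]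
  simp only [← Finset.sum_sub_distrib]
  refine Finset.sum_congr rfl fun x _ => ?_
  module

end VolterraAux

section VolterraAnalytic

attribute [local instance] Matrix.linftyOpNormedRing Matrix.linftyOpNormedAlgebra

variable (N : ℕ) [NeZero N]

private noncomputable def traceCLM :
    Matrix (ZMod (2 * N)) (ZMod (2 * N)) ℝ →L[ℝ] ℝ :=
  LinearMap.toContinuousLinearMap (Matrix.traceLinearMap (ZMod (2 * N)) ℝ ℝ)

private lemma trace_deriv_zero (a : ℝ → ZMod (2 * N) → ℝ)
    (hpos : ∀ t j, 0 < a t j)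
    (hvolt : ∀ t j, HasDerivAt (fun s => a s j) (a t j * (a t (j + 1) - a t (j - 1))) t)
    (n : ℕ) (t : ℝ) :
    HasDerivAt (fun r => (LaxL N (a r) ^ (2 * n)).trace) 0 t := by
  classical
  set c : ZMod (2 * N) → ℝ := fun j => Real.sqrt (a t j) with hc
  set L : Matrix (ZMod (2 * N)) (ZMod (2 * N)) ℝ := LaxL N (a t) with hLdef
  set B : Matrix (ZMod (2 * N)) (ZMod (2 * N)) ℝ :=
    ∑ j : ZMod (2 * N), (c j * c (j + 1) / 2) • (Emat N j (j + 2) - Emat N (j + 2) j) with hB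
  set L' : Matrix (ZMod (2 * N)) (ZMod (2 * N)) ℝ :=
    ∑ j : ZMod (2 * N), (c j * (c (j+1) * c (j+1) - c (j-1) * c (j-1)) / 2) •
      (Emat N j (j + 1) - Emat N (j + 1) j) with hL'
  -- derivative of the Lax matrix
  have hco : ∀ j : ZMod (2 * N),
      a t j * (a t (j + 1) - a t (j - 1)) / (2 * Real.sqrt (a t j))
        = c j * (c (j+1) * c (j+1) - c (j-1) * c (j-1)) / 2 := by
    intro j
    have h1 := Real.mul_self_sqrt (hpos t j).le
    have h2 := Real.mul_self_sqrt (hpos t (j+1)).le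
    have h3 := Real.mul_self_sqrt (hpos t (j-1)).le
    have hne : Real.sqrt (a t j) ≠ 0 := (Real.sqrt_pos.mpr (hpos t j)).ne'
    simp only [hc]
    field_simp
    simp only [Real.sq_sqrt (hpos t j).le, Real.sq_sqrt (hpos t (j+1)).le,
      Real.sq_sqrt (hpos t (j-1)).le]
  have hL : HasDerivAt (fun r => LaxL N (a r)) L' t := by
    have h := HasDerivAt.sum (u := Finset.univ)
      (fun (j : ZMod (2 * N)) _ => (((hvolt t j).sqrt (hpos t j).ne').smul_const
        (Emat N j (j + 1) - Emat N (j + 1) j)))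
    simp only [LaxL]
    convert h using 1
    · rfl
    · rfl
    · rfl
    · funext r; simp [Finset.sum_apply]
    rw [hL']
    exact Finset.sum_congr rfl fun j _ => by rw [← hco j]
  -- the Lax-pair identity
  have hlax : L' = L * B - B * L := by
    rw [hL', hLdef, hB]
    exact lax_pair N c
  -- derivative of powers of the Lax matrix
  have hpow : ∀ m : ℕ, HasDerivAt (fun r => LaxL N (a r) ^ m)
      (∑ k ∈ Finset.range m, L ^ k * L' * L ^ (m - 1 - k)) t := by
    intro m
    induction m with
    | zero =>
      simp only [pow_zero, Finset.range_zero, Finset.sum_empty]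
      exact hasDerivAt_const t (1 : Matrix (ZMod (2 * N)) (ZMod (2 * N)) ℝ)
    | succ m ih =>
      have h := ih.mul hL
      have heq : (fun r => LaxL N (a r) ^ (m + 1)) = fun r => LaxL N (a r) ^ m * LaxL N (a r) := by
        funext r; rw [pow_succ]
      rw [heq]
      convert h using 1
      · rfl
      · rfl
      · rfl
      · rfl
      rw [Finset.sum_range_succ, Finset.sum_mul]
      simp only [Nat.add_sub_cancel, Nat.sub_self, pow_zero, mul_one, ← hLdef]
      congr 1
      refine Finset.sum_congr rfl fun k hk => ?_
      have hk' : m - 1 - k + 1 = m - k := by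
        have := Finset.mem_range.mp hk; omega
      rw [← hk', pow_succ]
      simp only [mul_assoc]
  -- trace of the bracket vanishes
  have htr0 : ∀ m' : ℕ, ((L * B - B * L) * L ^ m').trace = 0 := by
    intro m'
    rw [sub_mul, Matrix.trace_sub, mul_assoc,
      Matrix.trace_mul_comm L (B * L ^ m'), mul_assoc, ← pow_succ,
      mul_assoc, ← pow_succ', sub_self]
  -- trace of the derivative of L^(2n) vanishes
  have htrd : (∑ k ∈ Finset.range (2 * n), L ^ k * L' * L ^ (2 * n - 1 - k)).trace = 0 := by
    rw [Matrix.trace_sum]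
    refine Finset.sum_eq_zero fun k hk => ?_
    rw [mul_assoc, Matrix.trace_mul_comm, mul_assoc, ← pow_add,
      show 2 * n - 1 - k + k = 2 * n - 1 by have := Finset.mem_range.mp hk; omega,
      hlax]
    exact htr0 (2 * n - 1)
  -- compose with the trace
  have h := (traceCLM N).hasFDerivAt.comp_hasDerivAt t (hpow (2 * n))
  simp only [traceCLM, LinearMap.coe_toContinuousLinearMap', Matrix.traceLinearMap,
    LinearMap.coe_mk, AddHom.coe_mk] at h
  rw [← htrd]
  exact h

end VolterraAnalytic

/-- Along any differentiable positive solution of the periodic Volterra lattice, the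
conserved fields `Q^{[n]}(t) = (-1)^n trace (L(a(t))^{2n})` are constant in time. -/
theorem volterra_conserved_fields (N : ℕ) [NeZero N] (hN : 3 ≤ N)
    (a : ℝ → ZMod (2 * N) → ℝ)
    (hpos : ∀ t j, 0 < a t j)
    (hvolt : ∀ t j, HasDerivAt (fun s => a s j) (a t j * (a t (j + 1) - a t (j - 1))) t) :
    ∀ (n : ℕ) (t s : ℝ),
      (-1 : ℝ) ^ n * (LaxL N (a t) ^ (2 * n)).trace
        = (-1 : ℝ) ^ n * (LaxL N (a s) ^ (2 * n)).trace := by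
  intro n t s
  have key := trace_deriv_zero N a hpos hvolt n
  have hconst : (LaxL N (a t) ^ (2 * n)).trace = (LaxL N (a s) ^ (2 * n)).trace :=
    is_const_of_deriv_eq_zero (fun x => (key x).differentiableAt)
      (fun x => (key x).deriv) t s
  rw [hconst]
end

section
/- Let β > 0. Then: (i) the limit 𝔉_AG(β) := lim_{N→∞} [ ln 2 − (1/(2N)) Σ_{j=1}^{2N−1} ln Γ( (β/2)(1 − j/(2N)) ) ] exists and equals ln 2 − (1/β) ∫_0^β ln Γ(v/2) dv; and (ii) the function β ↦ β·𝔉_AG(β) is differentiable on (0,∞) with d/dβ ( β 𝔉_AG(β) ) = ln 2 − ln Γ(β/2), the right-hand side being the free energy 𝓕_Volt(β) = −lim_{N→∞} (1/(2N)) ln( 2^{−2N} Γ(β/2)^{2N} ) of the Volterra lattice with quadratic potential. -/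
open Filter MeasureTheory Set Topology

lemma contAt_logGamma {x : ℝ} (hx : 0 < x) :
    ContinuousAt (fun y => Real.log (Real.Gamma y)) x := by
  have h : ∀ m : ℕ, x ≠ -m := by
    intro m hm
    have : (0:ℝ) ≤ (m:ℝ) := Nat.cast_nonneg m
    rw [hm] at hx; linarith
  exact (Real.differentiableAt_Gamma h).continuousAt.log (Real.Gamma_pos_of_pos hx).ne'

lemma contAt_f {x : ℝ} (hx : 0 < x) :
    ContinuousAt (fun v : ℝ => Real.log (Real.Gamma (v/2))) x := by
  exact ContinuousAt.comp (f := fun v : ℝ => v / 2) (contAt_logGamma (by linarith))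
    ((continuous_id.div_const 2).continuousAt)

lemma logGamma_rec {x : ℝ} (hx : 0 < x) :
    Real.log (Real.Gamma x) = Real.log (Real.Gamma (x+1)) - Real.log x := by
  rw [Real.Gamma_add_one hx.ne', Real.log_mul hx.ne' (Real.Gamma_pos_of_pos hx).ne']; ring

lemma II_log01 : IntervalIntegrable Real.log volume 0 1 := by
  rw [intervalIntegrable_iff, uIoc_of_le (zero_le_one)]
  have h : IntegrableOn (fun x : ℝ => -Real.log x) (Ioc (0:ℝ) 1) volume := by
    apply intervalIntegral.integrableOn_deriv_of_nonneg
      (g := fun x => x - x * Real.log x)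
    · exact (continuous_id.sub Real.continuous_mul_log).continuousOn
    · intro x hx
      have := (hasDerivAt_id x).sub (Real.hasDerivAt_mul_log hx.1.ne')
      exact this.congr_deriv (by ring)
    · intro x hx
      simp only [neg_nonneg]
      exact Real.log_nonpos hx.1.le hx.2.le
  exact h.neg.congr (Filter.Eventually.of_forall (fun x => by simp))

lemma II_log (b : ℝ) (hb : 0 ≤ b) : IntervalIntegrable Real.log volume 0 b := by
  rcases le_total b 1 with h | h
  · exact II_log01.mono_set (by rw [uIcc_of_le hb, uIcc_of_le zero_le_one]; exact Icc_subset_Icc le_rfl h)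
  · exact II_log01.trans (intervalIntegral.intervalIntegrable_log (by rw [uIcc_of_le h]; simp))

lemma II_f {b : ℝ} (hb : 0 < b) :
    IntervalIntegrable (fun v => Real.log (Real.Gamma (v/2))) volume 0 b := by
  rw [intervalIntegrable_iff, uIoc_of_le hb.le]
  have h1 : IntegrableOn (fun v : ℝ => Real.log (Real.Gamma (v/2+1)) - (Real.log v - Real.log 2))
      (Ioc 0 b) volume := by
    apply Integrable.sub
    · have hc : ContinuousOn (fun v : ℝ => Real.log (Real.Gamma (v/2+1))) (Icc 0 b) := by
        intro v hv
        exact ContinuousAt.continuousWithinAt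
          (ContinuousAt.comp (f := fun v : ℝ => v / 2 + 1)
            (contAt_logGamma (by nlinarith [hv.1] : (0:ℝ) < v/2+1))
            (((continuous_id.div_const 2).add continuous_const).continuousAt))
      exact (hc.integrableOn_Icc).mono_set Ioc_subset_Icc_self
    · have := (II_log b hb.le).sub (intervalIntegrable_const (c := Real.log 2))
      rw [intervalIntegrable_iff, uIoc_of_le hb.le] at this
      exact this
  apply h1.congr_fun _ measurableSet_Ioc
  intro v hv
  have hv2 : (0:ℝ) < v/2 := by have := hv.1; linarith
  show Real.log (Real.Gamma (v/2+1)) - (Real.log v - Real.log 2) = Real.log (Real.Gamma (v/2))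
  rw [logGamma_rec hv2]
  rw [show (v/2 : ℝ) = v * (1/2) by ring, Real.log_mul (by linarith) (by norm_num)]
  rw [Real.log_div one_ne_zero (by norm_num), Real.log_one]
  ring

lemma step_integral (F : ℝ → ℝ) {n : ℕ} (hn : 1 ≤ n) :
    ∫ t in (0:ℝ)..1, F ((⌈(n:ℝ) * t⌉₊ : ℝ)/n) =
      (1/(n:ℝ)) * ∑ k ∈ Finset.Icc 1 n, F ((k:ℝ)/n) := by
  have hn0 : (0:ℝ) < n := by exact_mod_cast hn
  set a : ℕ → ℝ := fun k => (k:ℝ)/n with ha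
  have hmono : ∀ k : ℕ, a k ≤ a (k+1) := by
    intro k
    simp only [ha]
    gcongr
    push_cast
    linarith
  have hceil : ∀ k : ℕ, ∀ t ∈ Ioc (a k) (a (k+1)), ⌈(n:ℝ) * t⌉₊ = k + 1 := by
    intro k t ht
    rw [Nat.ceil_eq_iff (Nat.succ_ne_zero k)]
    constructor
    · push_cast [Nat.add_sub_cancel]
      have := (div_lt_iff₀ hn0).mp ht.1
      linarith [this]
    · have := (le_div_iff₀ hn0).mp ht.2
      push_cast at this ⊢
      linarith [this]
  have heq : ∀ k : ℕ, ∀ t ∈ Set.uIoc (a k) (a (k+1)),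
      F ((⌈(n:ℝ) * t⌉₊ : ℝ)/n) = F (((k:ℝ)+1)/n) := by
    intro k t ht
    rw [uIoc_of_le (hmono k)] at ht
    rw [hceil k t ht]
    push_cast
    ring_nf
  have hint : ∀ k : ℕ, IntervalIntegrable (fun t => F ((⌈(n:ℝ) * t⌉₊ : ℝ)/n)) volume (a k) (a (k+1)) := by
    intro k
    rw [intervalIntegrable_iff]
    refine ((integrableOn_const_iff (C := F (((k:ℝ)+1)/n))).mpr (Or.inr ?_)).congr
      ((ae_restrict_iff' measurableSet_uIoc).mpr
        (Eventually.of_forall (fun t ht => (heq k t ht).symm)))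
    rw [uIoc_of_le (hmono k)]
    exact measure_Ioc_lt_top
  have hpiece : ∀ k : ℕ, ∫ t in a k..a (k+1), F ((⌈(n:ℝ) * t⌉₊ : ℝ)/n) = F (((k:ℝ)+1)/n) / n := by
    intro k
    rw [intervalIntegral.integral_congr_ae (Eventually.of_forall (heq k)),
      intervalIntegral.integral_const]
    have : a (k+1) - a k = 1/n := by
      simp only [ha]; push_cast; field_simp; ring
    rw [this, smul_eq_mul]; ring
  have hsum := intervalIntegral.sum_integral_adjacent_intervals (a := a) (n := n)
    (fun k _ => hint k)
  have ha0 : a 0 = 0 := by simp [ha]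
  have han : a n = 1 := by simp only [ha]; field_simp
  rw [ha0, han] at hsum
  rw [← hsum]
  rw [Finset.sum_congr rfl (fun k _ => hpiece k)]
  have : Finset.Icc 1 n = Finset.Ico 1 (n+1) := by rw [Finset.Ico_add_one_right_eq_Icc]
  rw [this, Finset.sum_Ico_eq_sum_range]
  simp only [Nat.add_sub_cancel]
  rw [Finset.mul_sum]
  apply Finset.sum_congr rfl
  intro k _
  push_cast
  ring

set_option maxHeartbeats 1000000 in
lemma step_tendsto {β : ℝ} (hβ : 0 < β) :
    Tendsto (fun n : ℕ => ∫ t in (0:ℝ)..1, Real.log (Real.Gamma (β * ((⌈(n:ℝ) * t⌉₊ : ℝ)/n) / 2)))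
      atTop (𝓝 (∫ t in (0:ℝ)..1, Real.log (Real.Gamma (β * t / 2)))) := by
  obtain ⟨C, hC⟩ := (isCompact_Icc (a := (1:ℝ)) (b := β/2+1)).exists_bound_of_continuousOn
    (fun x hx => (contAt_logGamma (by linarith [hx.1] : (0:ℝ) < x)).continuousWithinAt)
  apply intervalIntegral.tendsto_integral_filter_of_dominated_convergence
    (bound := fun t => C + |Real.log (β/2)| + |Real.log t|)
  · -- measurability
    apply Eventually.of_forall
    intro n
    have h1 : Measurable (fun t : ℝ => (⌈(n:ℝ)*t⌉₊ : ℕ)) :=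
      Nat.measurable_ceil.comp (measurable_id.const_mul _)
    have h2 : Measurable (fun k : ℕ => Real.log (Real.Gamma (β * ((k:ℝ)/n)/2))) :=
      measurable_of_countable _
    exact ((h2.comp h1).aestronglyMeasurable).restrict
  · -- bound
    filter_upwards [eventually_ge_atTop 1] with n hn
    apply Eventually.of_forall
    intro t ht
    rw [uIoc_of_le (zero_le_one' ℝ)] at ht
    have hn0 : (0:ℝ) < n := by exact_mod_cast hn
    set s : ℝ := (⌈(n:ℝ) * t⌉₊ : ℝ)/n with hs
    have hts : t ≤ s := by
      rw [hs, le_div_iff₀ hn0]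
      rw [mul_comm]
      exact Nat.le_ceil _
    have hs1 : s ≤ 1 := by
      rw [hs, div_le_one hn0]
      exact_mod_cast Nat.ceil_le.mpr (by nlinarith [ht.2] : (n:ℝ) * t ≤ ((n:ℕ):ℝ))
    have hs0 : 0 < s := lt_of_lt_of_le ht.1 hts
    have hβs : 0 < β * s / 2 := by positivity
    have hrw : Real.log (Real.Gamma (β * s / 2)) =
        Real.log (Real.Gamma (β * s / 2 + 1)) - Real.log (β/2) - Real.log s := by
      rw [logGamma_rec hβs, show β * s / 2 = β/2 * s by ring,
        Real.log_mul (by positivity) hs0.ne']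
      ring
    rw [Real.norm_eq_abs, hrw]
    have h1 : |Real.log (Real.Gamma (β * s / 2 + 1))| ≤ C := by
      have := hC (β * s / 2 + 1) ⟨by nlinarith, by nlinarith⟩
      rwa [Real.norm_eq_abs] at this
    have h2 : |Real.log s| ≤ |Real.log t| := by
      have hls : Real.log s ≤ 0 := Real.log_nonpos hs0.le hs1
      have hlt : Real.log t ≤ Real.log s := Real.log_le_log ht.1 hts
      rw [abs_of_nonpos hls, abs_of_nonpos (hlt.trans hls)]
      linarith
    have h3 : |Real.log (Real.Gamma (β * s / 2 + 1)) - Real.log (β/2) - Real.log s|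
        ≤ |Real.log (Real.Gamma (β * s / 2 + 1))| + (|Real.log (β/2)| + |Real.log s|) := by
      rw [sub_sub]
      exact (abs_sub _ _).trans (by gcongr; exact abs_add_le _ _)
    linarith
  · -- bound integrable
    exact (intervalIntegrable_const (c := C + |Real.log (β/2)|)).add II_log01.abs
  · -- pointwise limit
    apply Eventually.of_forall
    intro t ht
    rw [uIoc_of_le (zero_le_one' ℝ)] at ht
    have hst : Tendsto (fun n : ℕ => (⌈(n:ℝ) * t⌉₊ : ℝ)/n) atTop (𝓝 t) := by
      apply tendsto_of_tendsto_of_tendsto_of_le_of_le' (g := fun _ : ℕ => t)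
        (h := fun n : ℕ => t + 1/n) tendsto_const_nhds
      · simpa using (tendsto_const_nhds (x := t)).add tendsto_one_div_atTop_nhds_zero_nat
      · filter_upwards [eventually_ge_atTop 1] with n hn
        have hn0 : (0:ℝ) < n := by exact_mod_cast hn
        rw [le_div_iff₀ hn0, mul_comm]
        exact Nat.le_ceil _
      · filter_upwards [eventually_ge_atTop 1] with n hn
        have hn0 : (0:ℝ) < n := by exact_mod_cast hn
        rw [div_le_iff₀ hn0]
        have := Nat.ceil_lt_add_one (mul_nonneg hn0.le ht.1.le)
        calc (⌈(n:ℝ)*t⌉₊ : ℝ) ≤ n * t + 1 := this.le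
          _ = (t + 1/n) * n := by field_simp
    have hcont : ContinuousAt (fun u : ℝ => Real.log (Real.Gamma (β * u / 2))) t := by
      exact ContinuousAt.comp (f := fun u : ℝ => β * u / 2)
        (contAt_logGamma (show (0:ℝ) < β * t / 2 by nlinarith [ht.1]))
        (((continuous_const.mul continuous_id).div_const 2).continuousAt)
    exact (hcont.tendsto).comp hst

lemma sum_tendsto {β : ℝ} (hβ : 0 < β) :
    Tendsto (fun n : ℕ => (1/(n:ℝ)) * ∑ k ∈ Finset.Icc 1 (n-1),
        Real.log (Real.Gamma (β * ((k:ℝ)/n) / 2)))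
      atTop (𝓝 (∫ t in (0:ℝ)..1, Real.log (Real.Gamma (β * t / 2)))) := by
  have h := (step_tendsto hβ).sub
    ((tendsto_const_nhds (x := Real.log (Real.Gamma (β * 1 / 2)))).mul
      tendsto_one_div_atTop_nhds_zero_nat)
  rw [mul_zero, sub_zero] at h
  apply h.congr'
  filter_upwards [eventually_ge_atTop 1] with n hn
  obtain ⟨m, rfl⟩ : ∃ m, n = m + 1 := ⟨n - 1, (Nat.succ_pred_eq_of_pos hn).symm⟩
  rw [step_integral (fun u => Real.log (Real.Gamma (β * u / 2))) hn]
  rw [Finset.sum_Icc_succ_top (Nat.succ_le_succ (Nat.zero_le m))]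
  have h1 : ((m+1 : ℕ):ℝ)/((m+1 : ℕ):ℝ) = 1 := by
    apply div_self
    positivity
  rw [h1]
  simp only [Nat.add_sub_cancel]
  ring

/-- (i) The high-temperature free energy of the Antisymmetric Gaussian β ensemble with
quadratic potential, `𝔉_AG(β) = lim_N [ln 2 − (1/(2N)) Σ_{j=1}^{2N−1} ln Γ((β/2)(1 − j/(2N)))]`,
exists and equals `ln 2 − (1/β) ∫₀^β ln Γ(v/2) dv`;
(ii) `β ↦ β 𝔉_AG(β)` is differentiable on `(0,∞)` with derivative
`ln 2 − ln Γ(β/2)`, which is the Volterra free energy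
`𝓕_Volt(β) = −lim_N (1/(2N)) ln(2^{−2N} Γ(β/2)^{2N})`. -/
theorem antisymmetric_free_energy (β : ℝ) (hβ : 0 < β) :
    Tendsto (fun N : ℕ =>
        Real.log 2 - (1 / (2 * (N : ℝ))) * ∑ j ∈ Finset.Icc 1 (2 * N - 1),
          Real.log (Real.Gamma ((β / 2) * (1 - (j : ℝ) / (2 * (N : ℝ))))))
      atTop
      (nhds (Real.log 2 - (1 / β) * ∫ v in (0 : ℝ)..β, Real.log (Real.Gamma (v / 2))))
    ∧ HasDerivAt
        (fun b : ℝ =>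
          b * (Real.log 2 - (1 / b) * ∫ v in (0 : ℝ)..b, Real.log (Real.Gamma (v / 2))))
        (Real.log 2 - Real.log (Real.Gamma (β / 2))) β
    ∧ Tendsto (fun N : ℕ =>
        -((1 / (2 * (N : ℝ))) *
          Real.log ((2 : ℝ) ^ (-(2 * (N : ℤ))) * Real.Gamma (β / 2) ^ (2 * N))))
        atTop (nhds (Real.log 2 - Real.log (Real.Gamma (β / 2)))) := by
  refine ⟨?_, ?_, ?_⟩
  · -- part (i)
    have heqI : ∫ t in (0:ℝ)..1, Real.log (Real.Gamma (β * t / 2)) =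
        (1/β) * ∫ v in (0:ℝ)..β, Real.log (Real.Gamma (v/2)) := by
      have := intervalIntegral.integral_comp_mul_left (a := (0:ℝ)) (b := 1) (c := β)
        (f := fun v => Real.log (Real.Gamma (v/2))) hβ.ne'
      simpa [smul_eq_mul, one_div] using this
    have hι : Tendsto (fun N : ℕ => 2*N) atTop atTop := by
      apply tendsto_atTop_atTop_of_monotone (fun a b h => by omega)
      intro b; exact ⟨b, by omega⟩
    have h := ((sum_tendsto hβ).comp hι)
    rw [heqI] at h
    have hmain : Tendsto (fun N : ℕ => (1 / (2 * (N : ℝ))) * ∑ j ∈ Finset.Icc 1 (2 * N - 1),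
        Real.log (Real.Gamma ((β / 2) * (1 - (j : ℝ) / (2 * (N : ℝ))))))
        atTop (𝓝 ((1/β) * ∫ v in (0:ℝ)..β, Real.log (Real.Gamma (v/2)))) := by
      apply h.congr'
      filter_upwards [eventually_ge_atTop 1] with N hN
      have hN0 : (0:ℝ) < (N:ℝ) := by exact_mod_cast hN
      show (1/((2*N : ℕ):ℝ)) * ∑ k ∈ Finset.Icc 1 (2*N-1),
          Real.log (Real.Gamma (β * ((k:ℝ)/((2*N : ℕ):ℝ)) / 2)) = _
      have hcast : ((2*N : ℕ):ℝ) = 2*(N:ℝ) := by push_cast; ring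
      rw [hcast]
      congr 1
      apply Finset.sum_nbij' (i := fun k => 2*N - k) (j := fun k => 2*N - k)
      · intro a ha
        simp only [Finset.mem_Icc] at ha ⊢
        omega
      · intro a ha
        simp only [Finset.mem_Icc] at ha ⊢
        omega
      · intro a ha
        simp only [Finset.mem_Icc] at ha
        omega
      · intro a ha
        simp only [Finset.mem_Icc] at ha
        omega
      · intro k hk
        simp only [Finset.mem_Icc] at hk
        have hk2 : k ≤ 2*N := by omega
        have : ((2*N - k : ℕ):ℝ) = 2*(N:ℝ) - k := by
          push_cast [Nat.cast_sub hk2]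
          ring
        have h2N : (2*(N:ℝ)) ≠ 0 := by positivity
        rw [this, show (β/2) * (1 - (2*(N:ℝ) - (k:ℝ))/(2*(N:ℝ))) = β * ((k:ℝ)/(2*(N:ℝ)))/2
          from by rw [sub_div, div_self h2N]; ring]
    exact hmain.const_sub (Real.log 2)
  · -- part (ii)
    have hmeas : StronglyMeasurableAtFilter (fun v : ℝ => Real.log (Real.Gamma (v/2))) (𝓝 β) volume :=
      ContinuousAt.stronglyMeasurableAtFilter isOpen_Ioi (fun x hx => contAt_f hx) β hβ
    have hD : HasDerivAt (fun b : ℝ => b * Real.log 2 - ∫ v in (0:ℝ)..b, Real.log (Real.Gamma (v/2)))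
        (Real.log 2 - Real.log (Real.Gamma (β/2))) β := by
      have := (HasDerivAt.mul_const (hasDerivAt_id β) (Real.log 2)).sub
        (intervalIntegral.integral_hasDerivAt_right (II_f hβ) hmeas (contAt_f hβ))
      exact this.congr_deriv (by simp)
    apply hD.congr_of_eventuallyEq
    filter_upwards [Ioi_mem_nhds hβ] with b hb
    have hb0 : (b:ℝ) ≠ 0 := (ne_of_gt hb)
    field_simp
  · -- part (iii)
    have hΓ : (0:ℝ) < Real.Gamma (β/2) := Real.Gamma_pos_of_pos (by linarith)
    apply Tendsto.congr' _ tendsto_const_nhds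
    filter_upwards [eventually_ge_atTop 1] with N hN
    have hN0 : (0:ℝ) < (N:ℝ) := by exact_mod_cast hN
    rw [Real.log_mul (by positivity) (by positivity), Real.log_zpow, Real.log_pow]
    push_cast
    field_simp
    ring
end
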